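/- Let b₂ < 0, 0 < ℓ̃_d < ℓ̃_u, ρ̃₁₂ > 0, and C₀ = ((ℓ̃_u+ℓ̃_d)/2 − ρ̃₁₂/b₂)^{−1}. Define f(x) = C₀ for x ∈ [0,ℓ̃_d), f(x) = C₀(ℓ̃_u−x)/(ℓ̃_u−ℓ̃_d) + (C₀ρ̃₁₂/(b₂(ℓ̃_u−ℓ̃_d)))(e^{b₂(x−ℓ̃_d)}−1) for x ∈ [ℓ̃_d,ℓ̃_u], f(x) = (C₀ρ̃₁₂(e^{b₂(ℓ̃_u−ℓ̃_d)}−1)/(b₂(ℓ̃_u−ℓ̃_d)))e^{b₂(x−ℓ̃_u)} for x > ℓ̃_u, and f(x) = 0 otherwise. Then f is nonnegative and ∫_ℝ f(x) dx = 1. -/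

import Mathlib

open Real MeasureTheory Set Filter

theorem limiting_density_b1_zero (b₂ ld lu ρ₁₂ C₀ : ℝ)
    (hb₂ : b₂ < 0) (hld : 0 < ld) (hdu : ld < lu) (hρ : 0 < ρ₁₂)
    (hC₀ : C₀ = ((lu + ld) / 2 - ρ₁₂ / b₂)⁻¹)
    (f : ℝ → ℝ)
    (hf : f = fun x =>
      if x < 0 then 0
      else if x < ld then C₀
      else if x ≤ lu then
        C₀ * (lu - x) / (lu - ld) +
          C₀ * ρ₁₂ / (b₂ * (lu - ld)) * (exp (b₂ * (x - ld)) - 1)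
      else
        C₀ * ρ₁₂ * (exp (b₂ * (lu - ld)) - 1) / (b₂ * (lu - ld)) *
          exp (b₂ * (x - lu))) :
    (∀ x, 0 ≤ f x) ∧ ∫ x : ℝ, f x = 1 := by
  have hL : (0:ℝ) < lu - ld := sub_pos.mpr hdu
  have hLne : lu - ld ≠ 0 := ne_of_gt hL
  have hbne : b₂ ≠ 0 := ne_of_lt hb₂
  have hbL : b₂ * (lu - ld) < 0 := mul_neg_of_neg_of_pos hb₂ hL
  have hlu : (0:ℝ) < lu := hld.trans hdu
  have hρb : ρ₁₂ / b₂ < 0 := div_neg_of_pos_of_neg hρ hb₂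
  have hD : 0 < (lu + ld) / 2 - ρ₁₂ / b₂ := by linarith
  have hC : 0 < C₀ := hC₀ ▸ inv_pos.mpr hD
  -- nonnegativity
  have hnonneg : ∀ x, 0 ≤ f x := by
    intro x
    rw [hf]
    dsimp only
    split_ifs with h1 h2 h3
    · exact le_refl 0
    · exact hC.le
    · have hx1 : ld ≤ x := not_lt.mp h2
      have t1 : 0 ≤ C₀ * (lu - x) / (lu - ld) :=
        div_nonneg (mul_nonneg hC.le (by linarith)) hL.le
      have hexp : exp (b₂ * (x - ld)) ≤ 1 :=
        exp_le_one_iff.mpr (mul_nonpos_of_nonpos_of_nonneg hb₂.le (by linarith))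
      have ha : C₀ * ρ₁₂ / (b₂ * (lu - ld)) ≤ 0 :=
        div_nonpos_of_nonneg_of_nonpos (by positivity) hbL.le
      have t2 : 0 ≤ C₀ * ρ₁₂ / (b₂ * (lu - ld)) * (exp (b₂ * (x - ld)) - 1) := by
        nlinarith
      linarith
    · have hexp : exp (b₂ * (lu - ld)) ≤ 1 := exp_le_one_iff.mpr hbL.le
      have hnum : C₀ * ρ₁₂ * (exp (b₂ * (lu - ld)) - 1) ≤ 0 :=
        mul_nonpos_of_nonneg_of_nonpos (by positivity) (by linarith)
      have hquot : 0 ≤ C₀ * ρ₁₂ * (exp (b₂ * (lu - ld)) - 1) / (b₂ * (lu - ld)) := by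
        have := div_nonneg (neg_nonneg.mpr hnum) (neg_nonneg.mpr hbL.le)
        rwa [neg_div_neg_eq] at this
      exact mul_nonneg hquot (exp_pos _).le
  refine ⟨hnonneg, ?_⟩
  -- abbreviations
  set K : ℝ := C₀ * ρ₁₂ * (exp (b₂ * (lu - ld)) - 1) / (b₂ * (lu - ld)) with hK
  set g : ℝ → ℝ := fun x => C₀ * (lu - x) / (lu - ld) +
      C₀ * ρ₁₂ / (b₂ * (lu - ld)) * (exp (b₂ * (x - ld)) - 1) with hg
  set F : ℝ → ℝ := fun x => C₀ / (lu - ld) * (lu * x - x ^ 2 / 2) +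
      C₀ * ρ₁₂ / (b₂ * (lu - ld)) * (exp (b₂ * (x - ld)) / b₂ - x) with hF
  -- piece 1 : Iic 0
  have hae : ∀ᵐ x : ℝ, x ∈ Iic (0:ℝ) → f x = 0 := by
    have hsub : {x : ℝ | ¬(x ∈ Iic (0:ℝ) → f x = 0)} ⊆ {0} := by
      intro x hx
      simp only [mem_setOf_eq, Classical.not_imp, mem_Iic] at hx
      obtain ⟨hx1, hx2⟩ := hx
      by_contra hne
      have hxlt : x < 0 := lt_of_le_of_ne hx1 (by simpa using hne)
      exact hx2 (by rw [hf]; simp [hxlt])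
    exact ae_iff.mpr (measure_mono_null hsub volume_singleton)
  have hint1 : IntegrableOn f (Iic (0:ℝ)) := by
    have hae' : f =ᵐ[volume.restrict (Iic (0:ℝ))] (fun _ => (0:ℝ)) :=
      (ae_restrict_iff' measurableSet_Iic).mpr hae
    exact (integrable_zero _ _ _).congr hae'.symm
  have hI1 : ∫ x in Iic (0:ℝ), f x = 0 := by
    rw [setIntegral_congr_ae measurableSet_Iic hae]
    simp
  -- piece 2 : Ioc 0 ld
  have hf2eq : EqOn f (fun _ => C₀) (Ioc (0:ℝ) ld) := by
    intro x hx
    obtain ⟨hx0, hxld⟩ := hx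
    rw [hf]
    dsimp only
    rw [if_neg (not_lt.mpr hx0.le)]
    rcases lt_or_eq_of_le hxld with h | h
    · rw [if_pos h]
    · rw [if_neg (by simp [h]), if_pos (by linarith)]
      subst h
      field_simp
      simp
  have hint2 : IntegrableOn f (Ioc (0:ℝ) ld) := by
    refine (integrableOn_const measure_Ioc_lt_top.ne).congr_fun
      (fun x hx => (hf2eq hx).symm) measurableSet_Ioc
  have hI2 : ∫ x in Ioc (0:ℝ) ld, f x = ld * C₀ := by
    rw [setIntegral_congr_fun measurableSet_Ioc hf2eq, setIntegral_const]
    simp [Real.volume_Ioc, ENNReal.toReal_ofReal hld.le, hld.le]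
  -- piece 3 : Ioc ld lu
  have hgcont : Continuous g := by
    rw [hg]; fun_prop
  have hf3eq : EqOn f g (Ioc ld lu) := by
    intro x hx
    obtain ⟨hx1, hx2⟩ := hx
    rw [hf]
    dsimp only
    rw [if_neg (not_lt.mpr (by linarith)), if_neg (not_lt.mpr hx1.le), if_pos hx2]
  have hint3 : IntegrableOn f (Ioc ld lu) :=
    (hgcont.integrableOn_Ioc).congr_fun (fun x hx => (hf3eq hx).symm) measurableSet_Ioc
  have hFderiv : ∀ x : ℝ, HasDerivAt F (g x) x := by
    intro x
    have h1 : HasDerivAt (fun y : ℝ => b₂ * (y - ld)) (b₂ * 1) x :=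
      ((hasDerivAt_id x).sub_const ld).const_mul b₂
    have h2 : HasDerivAt (fun y : ℝ => exp (b₂ * (y - ld)))
        (exp (b₂ * (x - ld)) * (b₂ * 1)) x := (Real.hasDerivAt_exp _).comp x h1
    have h3 : HasDerivAt (fun y : ℝ => lu * y - y ^ 2 / 2) (lu - x) x := by
      have := ((hasDerivAt_id x).const_mul lu).sub ((hasDerivAt_pow 2 x).div_const 2)
      refine this.congr_deriv ?_
      simp
    have h4 : HasDerivAt (fun y : ℝ => exp (b₂ * (y - ld)) / b₂ - y)
        (exp (b₂ * (x - ld)) - 1) x := by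
      have := (h2.div_const b₂).sub (hasDerivAt_id x)
      refine this.congr_deriv ?_
      field_simp
    have h5 := (h3.const_mul (C₀ / (lu - ld))).add
      (h4.const_mul (C₀ * ρ₁₂ / (b₂ * (lu - ld))))
    rw [hF, hg]
    refine h5.congr_deriv ?_
    ring
  have hI3 : ∫ x in Ioc ld lu, f x = F lu - F ld := by
    rw [setIntegral_congr_fun measurableSet_Ioc hf3eq,
      ← intervalIntegral.integral_of_le hdu.le]
    exact intervalIntegral.integral_eq_sub_of_hasDerivAt
      (fun x _ => hFderiv x) (hgcont.intervalIntegrable _ _)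
  -- piece 4 : Ioi lu
  have htail_int : IntegrableOn (fun x => K * exp (b₂ * (x - lu))) (Ioi lu) := by
    have h : IntegrableOn (fun x => K * exp (-(b₂ * lu)) * exp (-(-b₂) * x)) (Ioi lu) :=
      (exp_neg_integrableOn_Ioi lu (neg_pos.mpr hb₂)).const_mul (K * exp (-(b₂ * lu)))
    refine h.congr_fun (fun x _ => ?_) measurableSet_Ioi
    dsimp only
    rw [mul_assoc, ← Real.exp_add]
    congr 1
    ring
  have hf4eq : EqOn f (fun x => K * exp (b₂ * (x - lu))) (Ioi lu) := by
    intro x hx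
    have hx' : lu < x := hx
    rw [hf]
    dsimp only
    rw [if_neg (not_lt.mpr (by linarith)), if_neg (not_lt.mpr (by linarith)),
      if_neg (not_le.mpr hx')]
  have hint4 : IntegrableOn f (Ioi lu) :=
    htail_int.congr_fun (fun x hx => (hf4eq hx).symm) measurableSet_Ioi
  have hGderiv : ∀ x ∈ Ici lu, HasDerivAt (fun y => K / b₂ * exp (b₂ * (y - lu)))
      (K * exp (b₂ * (x - lu))) x := by
    intro x _
    have h1 : HasDerivAt (fun y : ℝ => b₂ * (y - lu)) (b₂ * 1) x :=
      ((hasDerivAt_id x).sub_const lu).const_mul b₂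
    have h2 : HasDerivAt (fun y : ℝ => exp (b₂ * (y - lu)))
        (exp (b₂ * (x - lu)) * (b₂ * 1)) x := (Real.hasDerivAt_exp _).comp x h1
    have := h2.const_mul (K / b₂)
    refine this.congr_deriv ?_
    field_simp
  have htend : Tendsto (fun y => K / b₂ * exp (b₂ * (y - lu))) atTop (nhds 0) := by
    have h1 : Tendsto (fun y : ℝ => b₂ * (y - lu)) atTop atBot := by
      refine (tendsto_const_mul_atBot_of_neg hb₂).mpr ?_
      simpa [sub_eq_add_neg] using tendsto_atTop_add_const_right atTop (-lu) tendsto_id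
    have h2 := Real.tendsto_exp_atBot.comp h1
    simpa using h2.const_mul (K / b₂)
  have hI4 : ∫ x in Ioi lu, f x = -(K / b₂) := by
    rw [setIntegral_congr_fun measurableSet_Ioi hf4eq,
      integral_Ioi_of_hasDerivAt_of_tendsto' hGderiv htail_int htend]
    simp
  -- assemble
  have hint12 : IntegrableOn f (Iic ld) := by
    have := hint1.union hint2
    rwa [Iic_union_Ioc_eq_Iic hld.le] at this
  have hint123 : IntegrableOn f (Iic lu) := by
    have := hint12.union hint3
    rwa [Iic_union_Ioc_eq_Iic hdu.le] at this
  have hsplit : ∫ x : ℝ, f x =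
      (((∫ x in Iic (0:ℝ), f x) + ∫ x in Ioc (0:ℝ) ld, f x) + ∫ x in Ioc ld lu, f x)
        + ∫ x in Ioi lu, f x := by
    rw [← setIntegral_union (Iic_disjoint_Ioc le_rfl) measurableSet_Ioc hint1 hint2,
      Iic_union_Ioc_eq_Iic hld.le,
      ← setIntegral_union (Iic_disjoint_Ioc le_rfl) measurableSet_Ioc hint12 hint3,
      Iic_union_Ioc_eq_Iic hdu.le,
      ← setIntegral_union (Iic_disjoint_Ioi le_rfl) measurableSet_Ioi hint123 hint4,
      Iic_union_Ioi, setIntegral_univ]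
  rw [hsplit, hI1, hI2, hI3, hI4, hK, hF]
  simp only [sub_self, mul_zero, Real.exp_zero]
  have hDne : ((lu + ld) / 2 - ρ₁₂ / b₂) ≠ 0 := ne_of_gt hD
  have key : C₀ * ((lu + ld) / 2 - ρ₁₂ / b₂) = 1 := by
    rw [hC₀, inv_mul_cancel₀ hDne]
  rw [← key]
  field_simp [hbne, hLne]
  ring
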